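/- For all 0<q<1 and every integer n≥2, writing H=⌊n/2⌋ and letting δ_odd(n)=1 if n is odd and 0 if n is even, the offset satisfies b_n(q) − 2κ(q)·Σ_{k=0}^{H−1}(λ_k(q) − κ(q)) < 2H·q^{H+1} + δ_odd(n)·(λ_H(q)² − κ(q)²). -/

import Mathlib

/-- Partial product of the Euler function: `λ_k(q) = ∏_{i=1}^k (1 - q^i)`, with `λ_0(q) = 1`. -/
noncomputable def eulerLam (q : ℝ) (k : ℕ) : ℝ := ∏ i ∈ Finset.range k, (1 - q ^ (i + 1))

/-- The Euler function `κ(q) = ∏_{i=1}^∞ (1 - q^i)`. -/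
noncomputable def eulerKappa (q : ℝ) : ℝ := ∏' i : ℕ, (1 - q ^ (i + 1))

/-- The tail product `μ_n(q) = ∏_{i=n}^∞ (1 - q^i)`. -/
noncomputable def eulerMu (q : ℝ) (n : ℕ) : ℝ := ∏' i : ℕ, (1 - q ^ (n + i))

/-- The offset `b_n(q) = Σ_{k=1}^n λ_{k-1}(q) λ_{n-k}(q) - n κ(q)²`, the expected number of
posts in a random graph order on `n` elements minus `n κ(q)²`. -/
noncomputable def postOffset (q : ℝ) (n : ℕ) : ℝ :=
  (∑ k ∈ Finset.Icc 1 n, eulerLam q (k - 1) * eulerLam q (n - k)) - n * eulerKappa q ^ 2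

open Finset Filter

section Aux

variable {q : ℝ} (hq0 : 0 < q) (hq1 : q < 1)

include hq0 hq1

lemma euler_fac_pos (i : ℕ) : 0 < 1 - q ^ (i + 1) := by
  have h : q ^ (i + 1) < 1 := pow_lt_one₀ hq0.le hq1 (Nat.succ_ne_zero i)
  linarith

lemma eulerLam_pos (k : ℕ) : 0 < eulerLam q k :=
  Finset.prod_pos fun i _ => euler_fac_pos hq0 hq1 i

lemma eulerLam_le_one (k : ℕ) : eulerLam q k ≤ 1 :=
  Finset.prod_le_one (fun i _ => (euler_fac_pos hq0 hq1 i).le)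
    (fun i _ => by have := pow_pos hq0 (i + 1); linarith)

lemma eulerLam_le (k : ℕ) (hk : 1 ≤ k) : eulerLam q k ≤ 1 - q := by
  have h : eulerLam q k = (1 - q ^ (0 + 1)) * ∏ i ∈ Ico 1 k, (1 - q ^ (i + 1)) := by
    rw [eulerLam, ← Finset.prod_range_mul_prod_Ico _ hk, Finset.prod_range_one]
  rw [h]
  have h1 : ∏ i ∈ Ico 1 k, (1 - q ^ (i + 1)) ≤ 1 :=
    Finset.prod_le_one (fun i _ => (euler_fac_pos hq0 hq1 i).le)
      (fun i _ => by have := pow_pos hq0 (i + 1); linarith)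
  have h2 : 0 < 1 - q ^ (0 + 1) := euler_fac_pos hq0 hq1 0
  have hP0 : 0 ≤ ∏ i ∈ Ico 1 k, (1 - q ^ (i + 1)) :=
    Finset.prod_nonneg fun i _ => (euler_fac_pos hq0 hq1 i).le
  simp only [zero_add, pow_one] at h2 ⊢
  nlinarith

lemma euler_log_summable : Summable (fun i : ℕ => Real.log (1 - q ^ (i + 1))) := by
  rw [← summable_neg_iff]
  apply Summable.of_nonneg_of_le (f := fun i : ℕ => (1 - q)⁻¹ * q ^ (i + 1))
  · intro i
    have := Real.log_nonpos (euler_fac_pos hq0 hq1 i).le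
      (by have := pow_pos hq0 (i + 1); linarith)
    linarith
  · intro i
    have hpos := euler_fac_pos hq0 hq1 i
    have hle : q ^ (i + 1) ≤ q := pow_le_of_le_one hq0.le hq1.le (Nat.succ_ne_zero i)
    have h1 : Real.log ((1 - q ^ (i + 1))⁻¹) ≤ (1 - q ^ (i + 1))⁻¹ - 1 :=
      Real.log_le_sub_one_of_pos (by positivity)
    rw [Real.log_inv] at h1
    have h2 : (1 - q ^ (i + 1))⁻¹ - 1 = q ^ (i + 1) / (1 - q ^ (i + 1)) := by
      field_simp
      ring
    have h3 : q ^ (i + 1) / (1 - q ^ (i + 1)) ≤ q ^ (i + 1) / (1 - q) := by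
      apply div_le_div_of_nonneg_left (by positivity) (by linarith) (by linarith)
    have h4 : q ^ (i + 1) / (1 - q) = (1 - q)⁻¹ * q ^ (i + 1) := by
      rw [div_eq_inv_mul]
    linarith
  · exact (((summable_geometric_of_lt_one hq0.le hq1).mul_left q).congr
      (fun i => by rw [← pow_succ'])).mul_left _

lemma euler_multipliable : Multipliable (fun i : ℕ => 1 - q ^ (i + 1)) := by
  have := Real.multipliable_of_summable_log (fun i => euler_fac_pos hq0 hq1 i)
    (euler_log_summable hq0 hq1)
  exact this

lemma eulerLam_tendsto :
    Tendsto (fun N => eulerLam q N) atTop (nhds (eulerKappa q)) :=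
  (euler_multipliable hq0 hq1).hasProd.tendsto_prod_nat

omit hq0 hq1 in
/-- Finite Weierstrass product inequality. -/
lemma weierstrass (x : ℕ → ℝ) (hx0 : ∀ i, 0 ≤ x i) (hx1 : ∀ i, x i ≤ 1) :
    ∀ N : ℕ, 1 - ∑ i ∈ range N, x i ≤ ∏ i ∈ range N, (1 - x i) := by
  intro N
  induction N with
  | zero => simp
  | succ N ih =>
    rw [Finset.sum_range_succ, Finset.prod_range_succ]
    have hs : 0 ≤ ∑ i ∈ range N, x i := Finset.sum_nonneg fun i _ => hx0 i
    nlinarith [hx0 N, hx1 N]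

lemma eulerKappa_ge (m : ℕ) :
    eulerLam q m * (1 - q ^ (m + 1) * (1 - q)⁻¹) ≤ eulerKappa q := by
  refine ge_of_tendsto (eulerLam_tendsto hq0 hq1) ?_
  filter_upwards [eventually_ge_atTop m] with N hN
  have hsplit : eulerLam q N = eulerLam q m * ∏ i ∈ Ico m N, (1 - q ^ (i + 1)) := by
    rw [eulerLam, eulerLam, Finset.prod_range_mul_prod_Ico _ hN]
  have hre : ∏ i ∈ Ico m N, (1 - q ^ (i + 1)) = ∏ i ∈ range (N - m), (1 - q ^ (m + i + 1)) := by
    rw [Finset.prod_Ico_eq_prod_range]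
  have hw : 1 - ∑ i ∈ range (N - m), q ^ (m + i + 1) ≤
      ∏ i ∈ range (N - m), (1 - q ^ (m + i + 1)) := by
    apply weierstrass
    · intro i; positivity
    · intro i; exact (pow_le_one₀ hq0.le hq1.le)
  have hgeo : ∑ i ∈ range (N - m), q ^ (m + i + 1) ≤ q ^ (m + 1) * (1 - q)⁻¹ := by
    have h1 : ∑ i ∈ range (N - m), q ^ (m + i + 1) = q ^ (m + 1) * ∑ i ∈ range (N - m), q ^ i := by
      rw [Finset.mul_sum]
      exact Finset.sum_congr rfl fun i _ => by rw [← pow_add]; ring_nf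
    rw [h1]
    have h2 : ∑ i ∈ range (N - m), q ^ i ≤ (1 - q)⁻¹ := by
      calc ∑ i ∈ range (N - m), q ^ i ≤ ∑' i : ℕ, q ^ i :=
            (summable_geometric_of_lt_one hq0.le hq1).sum_le_tsum _ (fun i _ => by positivity)
        _ = (1 - q)⁻¹ := tsum_geometric_of_lt_one hq0.le hq1
    have : (0:ℝ) ≤ q ^ (m + 1) := by positivity
    nlinarith
  have hlam := eulerLam_pos hq0 hq1 m
  rw [hsplit, hre]
  have : 1 - q ^ (m + 1) * (1 - q)⁻¹ ≤ ∏ i ∈ range (N - m), (1 - q ^ (m + i + 1)) := by linarith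
  nlinarith

lemma eulerLam_sub_kappa_lt (m : ℕ) :
    eulerLam q m - eulerKappa q < eulerLam q m * (q ^ (m + 1) * (1 - q)⁻¹) := by
  have h := eulerKappa_ge hq0 hq1 (m + 1)
  have hstep : eulerLam q (m + 1) = eulerLam q m * (1 - q ^ (m + 1)) := by
    rw [eulerLam, eulerLam, Finset.prod_range_succ]
  rw [hstep] at h
  have hlam := eulerLam_pos hq0 hq1 m
  have h1q : 0 < 1 - q := by linarith
  have hinv : 0 < (1 - q)⁻¹ := by positivity
  have hp1 : 0 < q ^ (m + 1) := by positivity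
  have hp2 : q ^ (m + 2) = q ^ (m + 1) * q := by rw [pow_succ]
  have key : (1 - q ^ (m + 1)) * (1 - q ^ (m + 2) * (1 - q)⁻¹) >
      1 - q ^ (m + 1) * (1 - q)⁻¹ := by
    rw [hp2]
    have hid : q ^ (m + 1) * (1 - q)⁻¹ = q ^ (m + 1) + q ^ (m + 1) * q * (1 - q)⁻¹ := by
      field_simp
      ring
    rw [hid]
    nlinarith [mul_pos (mul_pos (mul_pos hp1 hp1) hq0) hinv]
  nlinarith [mul_lt_mul_of_pos_left key hlam]

/-- Key term bound: `λ_k (λ_m - κ) < q^{m+1}` for `m ≥ 1`. -/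
lemma euler_term_lt (k m : ℕ) (hm : 1 ≤ m) :
    eulerLam q k * (eulerLam q m - eulerKappa q) < q ^ (m + 1) := by
  have h1 := eulerLam_sub_kappa_lt hq0 hq1 m
  have hk0 := eulerLam_pos hq0 hq1 k
  have hk1 := eulerLam_le_one hq0 hq1 k
  have hm0 := eulerLam_pos hq0 hq1 m
  have hm1 := eulerLam_le hq0 hq1 m hm
  have h1q : 0 < 1 - q := by linarith
  have hp1 : 0 < q ^ (m + 1) := by positivity
  have step1 : eulerLam q k * (eulerLam q m - eulerKappa q) <
      eulerLam q k * (eulerLam q m * (q ^ (m + 1) * (1 - q)⁻¹)) :=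
    mul_lt_mul_of_pos_left h1 hk0
  have step2 : eulerLam q k * (eulerLam q m * (q ^ (m + 1) * (1 - q)⁻¹)) ≤ q ^ (m + 1) := by
    have hkm : eulerLam q k * eulerLam q m ≤ 1 - q := by nlinarith
    have hD : 0 < q ^ (m + 1) * (1 - q)⁻¹ := by positivity
    have : eulerLam q k * (eulerLam q m * (q ^ (m + 1) * (1 - q)⁻¹)) =
        (eulerLam q k * eulerLam q m) * (q ^ (m + 1) * (1 - q)⁻¹) := by ring
    rw [this]
    have h2 : (eulerLam q k * eulerLam q m) * (q ^ (m + 1) * (1 - q)⁻¹) ≤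
        (1 - q) * (q ^ (m + 1) * (1 - q)⁻¹) := by nlinarith
    have h3 : (1 - q) * (q ^ (m + 1) * (1 - q)⁻¹) = q ^ (m + 1) := by field_simp
    linarith
  linarith

end Aux

/-- Reflection identity for symmetric sums. -/
lemma sum_reflect_half (g : ℕ → ℝ) (n H r : ℕ) (hn : n = 2 * H + r) (hr : r ≤ 1)
    (hg : ∀ i < n, g (n - 1 - i) = g i) :
    ∑ i ∈ Finset.range n, g i = 2 * ∑ i ∈ Finset.range H, g i + r * g H := by
  have hHn : H ≤ n := by omega
  have h1 : (∑ i ∈ Finset.range H, g i) + ∑ i ∈ Finset.Ico H n, g i =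
      ∑ i ∈ Finset.range n, g i := Finset.sum_range_add_sum_Ico g hHn
  have h2 : ∑ i ∈ Finset.Ico H n, g i = ∑ i ∈ Finset.range (H + r), g (H + i) := by
    have hnm : n - H = H + r := by omega
    rw [Finset.sum_Ico_eq_sum_range, hnm]
  have h3 : ∑ i ∈ Finset.range (H + r), g (H + i) = ∑ i ∈ Finset.range (H + r), g i := by
    rw [← Finset.sum_range_reflect (fun i => g (H + i)) (H + r)]
    apply Finset.sum_congr rfl
    intro i hi
    rw [Finset.mem_range] at hi
    have e1 : H + (H + r - 1 - i) = n - 1 - i := by omega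
    rw [e1, hg i (by omega)]
  have h4 : ∑ i ∈ Finset.range (H + r), g i =
      ∑ i ∈ Finset.range H, g i + r * g H := by
    interval_cases r
    · simp
    · rw [Finset.sum_range_succ]; push_cast; ring
  rw [← h1, h2, h3, h4]
  ring

/-- For all `0 < q < 1` and every integer `n ≥ 2`, with `H = ⌊n/2⌋` and `δ_odd(n) = 1` if `n`
is odd and `0` otherwise, `b_n(q) - 2κ(q)·Σ_{k=0}^{H-1}(λ_k(q) - κ(q))
< 2H·q^{H+1} + δ_odd(n)·(λ_H(q)² - κ(q)²)`. -/
theorem postOffset_sub_partial_lt (q : ℝ) (hq0 : 0 < q) (hq1 : q < 1) (n : ℕ) (hn : 2 ≤ n) :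
    postOffset q n -
        2 * eulerKappa q * ∑ k ∈ Finset.range (n / 2), (eulerLam q k - eulerKappa q) <
      2 * (n / 2 : ℕ) * q ^ (n / 2 + 1) +
        (if n % 2 = 1 then (1 : ℝ) else 0) * (eulerLam q (n / 2) ^ 2 - eulerKappa q ^ 2) := by
  set H := n / 2 with hH
  set r := n % 2 with hr
  have hnH : n = 2 * H + r := by omega
  have hr1 : r ≤ 1 := by omega
  have hH1 : 1 ≤ H := by omega
  set g : ℕ → ℝ := fun i => eulerLam q i * eulerLam q (n - 1 - i) with hgdef
  -- Step 1: rewrite the Icc sum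
  have hIcc : ∑ k ∈ Finset.Icc 1 n, eulerLam q (k - 1) * eulerLam q (n - k) =
      ∑ i ∈ Finset.range n, g i := by
    rw [show Finset.Icc 1 n = Finset.Ico 1 (n + 1) by rfl, Finset.sum_Ico_eq_sum_range]
    apply Finset.sum_congr (by rw [Nat.add_sub_cancel])
    intro i hi
    rw [Finset.mem_range] at hi
    simp only [hgdef]
    have e1 : 1 + i - 1 = i := by omega
    have e2 : n - (1 + i) = n - 1 - i := by omega
    rw [e1, e2]
  have hgsym : ∀ i < n, g (n - 1 - i) = g i := by
    intro i hi
    simp only [hgdef]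
    rw [show n - 1 - (n - 1 - i) = i by omega, mul_comm]
  have hsum : ∑ i ∈ Finset.range n, g i = 2 * ∑ i ∈ Finset.range H, g i + r * g H :=
    sum_reflect_half g n H r hnH hr1 hgsym
  have hgH : r = 1 → g H = eulerLam q H ^ 2 := by
    intro h1
    simp only [hgdef]
    rw [show n - 1 - H = H by omega, sq]
  -- Step 2: bound the sum of terms
  have hterm : ∀ i ∈ Finset.range H, g i - eulerKappa q * eulerLam q i < q ^ (H + 1) := by
    intro i hi
    rw [Finset.mem_range] at hi
    have hm1 : 1 ≤ n - 1 - i := by omega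
    have key := euler_term_lt hq0 hq1 i (n - 1 - i) hm1
    have hid : g i - eulerKappa q * eulerLam q i =
        eulerLam q i * (eulerLam q (n - 1 - i) - eulerKappa q) := by
      simp only [hgdef]; ring
    have hexp : q ^ (n - 1 - i + 1) ≤ q ^ (H + 1) :=
      pow_le_pow_of_le_one hq0.le hq1.le (by omega)
    rw [hid]
    linarith
  have hsum2 : ∑ i ∈ Finset.range H, (g i - eulerKappa q * eulerLam q i) <
      ∑ i ∈ Finset.range H, q ^ (H + 1) :=
    Finset.sum_lt_sum_of_nonempty (by simp [Finset.nonempty_range_iff]; omega) hterm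
  rw [Finset.sum_const, Finset.card_range, nsmul_eq_mul] at hsum2
  rw [Finset.sum_sub_distrib, ← Finset.mul_sum] at hsum2
  -- Step 3: algebra
  have hcast : (n : ℝ) = 2 * H + r := by exact_mod_cast congrArg (Nat.cast : ℕ → ℝ) hnH
  have hif : (if n % 2 = 1 then (1:ℝ) else 0) = (r : ℝ) := by
    rcases Nat.mod_two_eq_zero_or_one n with h | h <;> simp [← hr, hr ▸ h]
  rw [postOffset, hIcc, hsum, hif, hcast]
  have hsplit : ∑ k ∈ Finset.range H, (eulerLam q k - eulerKappa q) =
      (∑ k ∈ Finset.range H, eulerLam q k) - H * eulerKappa q := by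
    rw [Finset.sum_sub_distrib, Finset.sum_const, Finset.card_range, nsmul_eq_mul]
  rw [hsplit]
  rcases Nat.eq_zero_or_pos r with h0 | h1
  · rw [h0]
    push_cast
    nlinarith [hsum2]
  · have hr1' : r = 1 := by omega
    rw [hgH hr1', hr1']
    push_cast
    nlinarith [hsum2]
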